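/- Every set functor F that preserves inverse images admits a greatest normal lax extension: a normal lax extension Λ of F such that Λ' r ≤ Λr for every normal lax extension Λ' of F and every relation r. -/

import Mathlib

open CategoryTheory Function

universe u

/-- Applicative composition of relations: `relComp s r = s · r`. -/
def relComp {X Y Z : Type u} (s : Y → Z → Prop) (r : X → Y → Prop) : X → Z → Prop :=
  fun x z => ∃ y, r x y ∧ s y z

/-- Converse of a relation. -/
def relConv {X Y : Type u} (r : X → Y → Prop) : Y → X → Prop := fun y x => r x y

/-- Graph relation of a function. -/
def fgraph {X Y : Type u} (f : X → Y) : X → Y → Prop := fun x y => f x = y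

/-- An `F`-relator: a monotone assignment of relations `F X ⇸ F Y` to relations `X ⇸ Y`. -/
structure Relator (F : Type u ⥤ Type u) : Type (u + 1) where
  map : ∀ {X Y : Type u}, (X → Y → Prop) → (F.obj X → F.obj Y → Prop)
  mono : ∀ {X Y : Type u} {r s : X → Y → Prop}, (∀ x y, r x y → s x y) →
    ∀ u v, map r u v → map s u v

/-- `f` is a coalgebra homomorphism from `(X, α)` to `(Y, β)`. -/
def IsCoalgHom (F : Type u ⥤ Type u) {X Y : Type u} (α : X → F.obj X) (β : Y → F.obj Y)
    (f : X → Y) : Prop :=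
  ∀ x, β (f x) = F.map (TypeCat.ofHom f) (α x)

/-- Behavioural equivalence of states. -/
def BehEq (F : Type u ⥤ Type u) {X Y : Type u} (α : X → F.obj X) (β : Y → F.obj Y)
    (x : X) (y : Y) : Prop :=
  ∃ (Z : Type u) (γ : Z → F.obj Z) (f : X → Z) (g : Y → Z),
    IsCoalgHom F α γ f ∧ IsCoalgHom F β γ g ∧ f x = g y

/-- `r` is a `Λ`-simulation from `(X, α)` to `(Y, β)`: `r ≤ β° · Λr · α`. -/
def IsSimulation {F : Type u ⥤ Type u} (Λ : Relator F) {X Y : Type u}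
    (α : X → F.obj X) (β : Y → F.obj Y) (r : X → Y → Prop) : Prop :=
  ∀ x y, r x y → Λ.map r (α x) (β y)

/-- `x` and `y` are `Λ`-similar: related by some `Λ`-simulation. -/
def Similar' {F : Type u ⥤ Type u} (Λ : Relator F) {X Y : Type u}
    (α : X → F.obj X) (β : Y → F.obj Y) (x : X) (y : Y) : Prop :=
  ∃ r, IsSimulation Λ α β r ∧ r x y

/-- `Λ` is a relax extension of `F`: `Ff ≤ Λf` and `(Ff)° ≤ Λ(f°)` for all functions `f`. -/
def IsRelaxExtension (F : Type u ⥤ Type u) (Λ : Relator F) : Prop :=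
  ∀ {X Y : Type u} (f : X → Y),
    (∀ (u : F.obj X) (v : F.obj Y), F.map (TypeCat.ofHom f) u = v → Λ.map (fgraph f) u v) ∧
    (∀ (v : F.obj Y) (u : F.obj X), F.map (TypeCat.ofHom f) u = v → Λ.map (relConv (fgraph f)) v u)

/-- `Λ` is a lax extension of `F`: a relax extension with `Λs · Λr ≤ Λ(s · r)`. -/
def IsLaxExtension (F : Type u ⥤ Type u) (Λ : Relator F) : Prop :=
  IsRelaxExtension F Λ ∧
    ∀ {X Y Z : Type u} (r : X → Y → Prop) (s : Y → Z → Prop)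
      (u : F.obj X) (w : F.obj Z),
      relComp (Λ.map s) (Λ.map r) u w → Λ.map (relComp s r) u w

/-- `Λ` is normal: `Λ1_X = 1_{FX}` for every set `X`. -/
def IsNormal (F : Type u ⥤ Type u) (Λ : Relator F) : Prop :=
  ∀ (X : Type u) (u v : F.obj X), Λ.map (@Eq X) u v ↔ u = v

/-- The commutative square `f ∘ p = g ∘ q` is a pullback square (in `Set`). -/
def IsPullbackSq {P X B A : Type u} (p : P → X) (q : P → B) (f : X → A) (g : B → A) : Prop :=
  (∀ w, f (p w) = g (q w)) ∧ ∀ x b, f x = g b → ∃! w, p w = x ∧ q w = b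

/-- `F` preserves inverse images: it preserves every pullback of a cospan whose
second leg is injective. -/
def PreservesInverseImages (F : Type u ⥤ Type u) : Prop :=
  ∀ {P X B A : Type u} (p : P → X) (q : P → B) (f : X → A) (m : B → A),
    Function.Injective m → IsPullbackSq p q f m →
      IsPullbackSq (F.map (TypeCat.ofHom p)) (F.map (TypeCat.ofHom q)) (F.map (TypeCat.ofHom f))
        (F.map (TypeCat.ofHom m))

namespace Stmt12Aux

variable {F : Type u ⥤ Type u}

lemma mapc (F : Type u ⥤ Type u) {X Y Z : Type u} (f : X → Y) (g : Y → Z) (u : F.obj X) :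
    F.map (TypeCat.ofHom fun x => g (f x)) u = F.map (TypeCat.ofHom g) (F.map (TypeCat.ofHom f) u) :=
  F.map_comp_apply (TypeCat.ofHom f) (TypeCat.ofHom g) u

lemma mapid (F : Type u ⥤ Type u) {X : Type u} (u : F.obj X) :
    F.map (TypeCat.ofHom fun x : X => x) u = u :=
  F.map_id_apply X u

/-- Canonical pullback of a cospan. -/
def Pb {X B A : Type u} (f : X → A) (m : B → A) : Type u := {p : X × B // f p.1 = m p.2}

lemma pb_sq {X B A : Type u} (f : X → A) (m : B → A) :
    IsPullbackSq (fun w : Pb f m => w.1.1) (fun w : Pb f m => w.1.2) f m := by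
  refine ⟨fun w => w.2, fun x b hxb => ⟨⟨(x, b), hxb⟩, ⟨rfl, rfl⟩, ?_⟩⟩
  rintro ⟨⟨x', b'⟩, h'⟩ ⟨rfl, rfl⟩
  rfl

lemma restrict (h : PreservesInverseImages F) {X B A : Type u} (f : X → A) (m : B → A)
    (hm : Injective m) (u : F.obj X) (b : F.obj B) (heq : F.map (TypeCat.ofHom f) u = F.map (TypeCat.ofHom m) b) :
    ∃ w : F.obj (Pb f m), F.map (TypeCat.ofHom fun w : Pb f m => w.1.1) w = u ∧
      F.map (TypeCat.ofHom fun w : Pb f m => w.1.2) w = b := by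
  obtain ⟨w, hw, -⟩ := (h _ _ f m hm (pb_sq f m)).2 u b heq
  exact ⟨w, hw⟩

/-- The candidate greatest normal lax extension. -/
def GNLE (F : Type u ⥤ Type u) : Relator F where
  map {X Y} r u v :=
    ∀ (X' Y' C : Type u) (jX : X' → X) (jY : Y' → Y)
      (u' : F.obj X') (v' : F.obj Y') (p : X' → C) (q : Y' → C),
      Injective jX → Injective jY → F.map (TypeCat.ofHom jX) u' = u → F.map (TypeCat.ofHom jY) v' = v →
      (∀ x' y', r (jX x') (jY y') → p x' = q y') → F.map (TypeCat.ofHom p) u' = F.map (TypeCat.ofHom q) v'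
  mono := by
    intro X Y r s hrs u v hm X' Y' C jX jY u' v' p q hjX hjY hu hv hcos
    exact hm X' Y' C jX jY u' v' p q hjX hjY hu hv
      (fun x' y' hr => hcos x' y' (hrs _ _ hr))

lemma gnle_relax (h : PreservesInverseImages F) : IsRelaxExtension F (GNLE F) := by
  intro X Y f
  constructor
  · intro u v hfv
    intro X' Y' C jX jY u' v' p q hjX hjY hu hv hcos
    have heq : F.map (TypeCat.ofHom fun x' => f (jX x')) u' = F.map (TypeCat.ofHom jY) v' := by
      rw [mapc F jX f u', hu, hfv, hv]
    obtain ⟨wp, h1, h2⟩ := restrict h (fun x' => f (jX x')) jY hjY u' v' heq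
    have hfun : (fun w : Pb (fun x' => f (jX x')) jY => p w.1.1)
        = (fun w : Pb (fun x' => f (jX x')) jY => q w.1.2) :=
      funext fun w => hcos w.1.1 w.1.2 w.2
    have c1 : F.map (TypeCat.ofHom p) u' = F.map (TypeCat.ofHom fun w : Pb (fun x' => f (jX x')) jY => p w.1.1) wp := by
      rw [← h1]; exact (mapc F _ p wp).symm
    have c2 : F.map (TypeCat.ofHom q) v' = F.map (TypeCat.ofHom fun w : Pb (fun x' => f (jX x')) jY => q w.1.2) wp := by
      rw [← h2]; exact (mapc F _ q wp).symm
    rw [c1, c2, hfun]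
  · intro v u hfv
    intro Y₁ X₁ C jY jX v₁ u₁ p q hjY hjX hv hu hcos
    have heq : F.map (TypeCat.ofHom fun x₁ => f (jX x₁)) u₁ = F.map (TypeCat.ofHom jY) v₁ := by
      rw [mapc F jX f u₁, hu, hfv, hv]
    obtain ⟨wp, h1, h2⟩ := restrict h (fun x₁ => f (jX x₁)) jY hjY u₁ v₁ heq
    have hfun : (fun w : Pb (fun x₁ => f (jX x₁)) jY => p w.1.2)
        = (fun w : Pb (fun x₁ => f (jX x₁)) jY => q w.1.1) :=
      funext fun w => hcos w.1.2 w.1.1 w.2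
    have c1 : F.map (TypeCat.ofHom p) v₁ = F.map (TypeCat.ofHom fun w : Pb (fun x₁ => f (jX x₁)) jY => p w.1.2) wp := by
      rw [← h2]; exact (mapc F _ p wp).symm
    have c2 : F.map (TypeCat.ofHom q) u₁ = F.map (TypeCat.ofHom fun w : Pb (fun x₁ => f (jX x₁)) jY => q w.1.1) wp := by
      rw [← h1]; exact (mapc F _ q wp).symm
    rw [c1, c2, hfun]

lemma gnle_normal (h : PreservesInverseImages F) : IsNormal F (GNLE F) := by
  intro X u v
  constructor
  · intro hm
    have := hm X X X (fun x => x) (fun x => x) u v (fun x => x) (fun x => x)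
      (fun _ _ hab => hab) (fun _ _ hab => hab) (mapid F u) (mapid F v)
      (fun x' y' hxy => hxy)
    rwa [mapid F u, mapid F v] at this
  · intro huv
    intro X' Y' C jX jY u' v' p q hjX hjY hu hv hcos
    have heq : F.map (TypeCat.ofHom jX) u' = F.map (TypeCat.ofHom jY) v' := by rw [hu, hv, huv]
    obtain ⟨wp, h1, h2⟩ := restrict h jX jY hjY u' v' heq
    have hfun : (fun w : Pb jX jY => p w.1.1) = (fun w : Pb jX jY => q w.1.2) :=
      funext fun w => hcos w.1.1 w.1.2 w.2
    have c1 : F.map (TypeCat.ofHom p) u' = F.map (TypeCat.ofHom fun w : Pb jX jY => p w.1.1) wp := by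
      rw [← h1]; exact (mapc F _ p wp).symm
    have c2 : F.map (TypeCat.ofHom q) v' = F.map (TypeCat.ofHom fun w : Pb jX jY => q w.1.2) wp := by
      rw [← h2]; exact (mapc F _ q wp).symm
    rw [c1, c2, hfun]

lemma gnle_comp (h : PreservesInverseImages F) {X Y Z : Type u}
    (r : X → Y → Prop) (s : Y → Z → Prop) (u : F.obj X) (w : F.obj Z)
    (hc : relComp ((GNLE F).map s) ((GNLE F).map r) u w) :
    (GNLE F).map (relComp s r) u w := by
  obtain ⟨v, huv, hvw⟩ := hc
  intro X' Z' C jX jZ u' w' p q hjX hjZ hu hw hpq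
  classical
  -- the predicates "has an r-predecessor in the restricted X" and
  -- "has an s-successor in the restricted Z"
  set A : Y → Prop := fun y => ∃ x', r (jX x') y
  set B : Y → Prop := fun y => ∃ z', s y (jZ z')
  set t : PUnit.{u+1} → ULift.{u} Prop := fun _ => ⟨True⟩
  have hti : Function.Injective t := fun a b _ => Subsingleton.elim a b
  set qA : Y → ULift.{u} Prop := fun y => ⟨A y⟩
  set qB : Y → ULift.{u} Prop := fun y => ⟨B y⟩
  -- v restricts along the A-part
  have h1 : F.map (TypeCat.ofHom fun _ : X' => (⟨True⟩ : ULift.{u} Prop)) u' = F.map (TypeCat.ofHom qA) v :=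
    huv X' Y (ULift.{u} Prop) jX (fun y => y) u' v _ qA hjX (fun _ _ hab => hab)
      hu (mapid F v) (fun x' y hr => congrArg ULift.up (eq_true ⟨x', hr⟩).symm)
  have e1 : F.map (TypeCat.ofHom fun _ : X' => (⟨True⟩ : ULift.{u} Prop)) u'
      = F.map (TypeCat.ofHom t) (F.map (TypeCat.ofHom fun _ : X' => PUnit.unit) u') :=
    mapc F (fun _ : X' => PUnit.unit) t u'
  obtain ⟨va, hva, -⟩ := restrict h qA t hti v (F.map (TypeCat.ofHom fun _ : X' => PUnit.unit) u')
    (h1.symm.trans e1)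
  -- v restricts along the B-part
  have h2 : F.map (TypeCat.ofHom qB) v = F.map (TypeCat.ofHom fun _ : Z' => (⟨True⟩ : ULift.{u} Prop)) w' :=
    hvw Y Z' (ULift.{u} Prop) (fun y => y) jZ v w' qB _ (fun _ _ hab => hab) hjZ
      (mapid F v) hw (fun y z' hs => congrArg ULift.up (eq_true ⟨z', hs⟩))
  have e2 : F.map (TypeCat.ofHom fun _ : Z' => (⟨True⟩ : ULift.{u} Prop)) w'
      = F.map (TypeCat.ofHom t) (F.map (TypeCat.ofHom fun _ : Z' => PUnit.unit) w') :=
    mapc F (fun _ : Z' => PUnit.unit) t w'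
  obtain ⟨vb, hvb, -⟩ := restrict h qB t hti v (F.map (TypeCat.ofHom fun _ : Z' => PUnit.unit) w')
    (h2.trans e2)
  -- intersect the two restrictions
  have hπBi : Function.Injective (fun w : Pb qB t => w.1.1) := by
    rintro ⟨⟨y₁, u₁⟩, hy₁⟩ ⟨⟨y₂, u₂⟩, hy₂⟩ hab
    exact Subtype.ext (Prod.ext hab (Subsingleton.elim _ _))
  obtain ⟨v₀, h01, h02⟩ := restrict h (fun w : Pb qA t => w.1.1)
    (fun w : Pb qB t => w.1.1) hπBi va vb (hva.trans hvb.symm)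
  set jY₀ : Pb (fun w : Pb qA t => w.1.1) (fun w : Pb qB t => w.1.1) → Y :=
    fun w => w.1.1.1.1
  have hjY0 : Function.Injective jY₀ := by
    rintro ⟨⟨a1, a2⟩, ha⟩ ⟨⟨b1, b2⟩, hb⟩ hab
    have h1' : a1 = b1 := Subtype.ext (Prod.ext hab (Subsingleton.elim _ _))
    have h2' : a2 = b2 := hπBi (by rw [← ha, ← hb, h1'])
    exact Subtype.ext (Prod.ext h1' h2')
  have hFjY0 : F.map (TypeCat.ofHom jY₀) v₀ = v := by
    have e3 : F.map (TypeCat.ofHom jY₀) v₀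
        = F.map (TypeCat.ofHom fun w : Pb qA t => w.1.1)
            (F.map (TypeCat.ofHom fun w : Pb (fun w : Pb qA t => w.1.1) (fun w : Pb qB t => w.1.1) =>
              w.1.1) v₀) :=
      mapc F _ (fun w : Pb qA t => w.1.1) v₀
    exact e3.trans (by rw [h01, hva])
  have hA' : ∀ w : Pb (fun w : Pb qA t => w.1.1) (fun w : Pb qB t => w.1.1),
      ∃ x', r (jX x') (jY₀ w) := fun w =>
    of_eq_true (congrArg ULift.down w.1.1.2)
  have hB' : ∀ w : Pb (fun w : Pb qA t => w.1.1) (fun w : Pb qB t => w.1.1),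
      ∃ z', s (jY₀ w) (jZ z') := by
    intro w
    have hb := of_eq_true (congrArg ULift.down w.1.2.2)
    have he : jY₀ w = w.1.2.1.1 := w.2
    rw [he]; exact hb
  set m : Pb (fun w : Pb qA t => w.1.1) (fun w : Pb qB t => w.1.1) → C :=
    fun w => q (Classical.choose (hB' w))
  have key1 : F.map (TypeCat.ofHom p) u' = F.map (TypeCat.ofHom m) v₀ :=
    huv X' _ C jX jY₀ u' v₀ p m hjX hjY0 hu hFjY0 (fun x' w' hr =>
      hpq x' (Classical.choose (hB' w'))
        ⟨jY₀ w', hr, Classical.choose_spec (hB' w')⟩)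
  have key2 : F.map (TypeCat.ofHom m) v₀ = F.map (TypeCat.ofHom q) w' := by
    refine hvw _ Z' C jY₀ jZ v₀ w' m q hjY0 hjZ hFjY0 hw ?_
    intro w₀ z' hs
    have hx := Classical.choose_spec (hA' w₀)
    have hz := Classical.choose_spec (hB' w₀)
    have e1' := hpq (Classical.choose (hA' w₀)) (Classical.choose (hB' w₀))
      ⟨jY₀ w₀, hx, hz⟩
    have e2' := hpq (Classical.choose (hA' w₀)) z' ⟨jY₀ w₀, hx, hs⟩
    exact e1'.symm.trans e2'
  exact key1.trans key2

lemma gnle_greatest (Λ' : Relator F) (hlax : IsLaxExtension F Λ') (hnorm : IsNormal F Λ')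
    {X Y : Type u} (r : X → Y → Prop) (u : F.obj X) (v : F.obj Y)
    (hr : Λ'.map r u v) : (GNLE F).map r u v := by
  obtain ⟨hre, hcomp⟩ := hlax
  intro X' Y' C jX jY u' v' p q hjX hjY hu hv hcos
  have h1 : Λ'.map (fgraph jX) u' u := (hre jX).1 u' u hu
  have h2 : Λ'.map (relConv (fgraph jY)) v v' := (hre jY).2 v v' hv
  have h3 : Λ'.map (relComp r (fgraph jX)) u' v := hcomp (fgraph jX) r u' v ⟨u, h1, hr⟩
  have h4 : Λ'.map (relComp (relConv (fgraph jY)) (relComp r (fgraph jX))) u' v' :=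
    hcomp (relComp r (fgraph jX)) (relConv (fgraph jY)) u' v' ⟨v, h3, h2⟩
  have h5 : Λ'.map (relComp (relConv (fgraph q)) (fgraph p)) u' v' := by
    refine Λ'.mono ?_ u' v' h4
    rintro x' y' ⟨ym, ⟨xm, hx, hrm⟩, hy⟩
    refine ⟨p x', rfl, ?_⟩
    have hrxy : r (jX x') (jY y') := by
      have hx' : jX x' = xm := hx
      have hy' : jY y' = ym := hy
      rw [hx', hy']; exact hrm
    exact (hcos x' y' hrxy).symm
  have h6 : Λ'.map (fgraph q) v' (F.map (TypeCat.ofHom q) v') := (hre q).1 v' _ rfl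
  have h7 : Λ'.map (relComp (fgraph q) (relComp (relConv (fgraph q)) (fgraph p)))
      u' (F.map (TypeCat.ofHom q) v') :=
    hcomp (relComp (relConv (fgraph q)) (fgraph p)) (fgraph q) u' (F.map (TypeCat.ofHom q) v') ⟨v', h5, h6⟩
  have h8 : Λ'.map (fgraph p) u' (F.map (TypeCat.ofHom q) v') := by
    refine Λ'.mono ?_ _ _ h7
    rintro x' c ⟨y', ⟨c', hp, hq'⟩, hq⟩
    exact hp.trans (hq'.symm.trans hq)
  have h9 : Λ'.map (relConv (fgraph p)) (F.map (TypeCat.ofHom p) u') u' := (hre p).2 _ u' rfl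
  have h10 : Λ'.map (relComp (fgraph p) (relConv (fgraph p)))
      (F.map (TypeCat.ofHom p) u') (F.map (TypeCat.ofHom q) v') :=
    hcomp (relConv (fgraph p)) (fgraph p) (F.map (TypeCat.ofHom p) u') (F.map (TypeCat.ofHom q) v') ⟨u', h9, h8⟩
  have h11 : Λ'.map (@Eq C) (F.map (TypeCat.ofHom p) u') (F.map (TypeCat.ofHom q) v') := by
    refine Λ'.mono ?_ _ _ h10
    rintro c1 c2 ⟨x', hc1, hc2⟩
    exact hc1.symm.trans hc2
  exact (hnorm C _ _).mp h11

end Stmt12Aux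
/-- Every set functor that preserves inverse images admits a
greatest normal lax extension. -/
theorem stmt12 (F : Type u ⥤ Type u) (h : PreservesInverseImages F) :
    ∃ Λ : Relator F, IsLaxExtension F Λ ∧ IsNormal F Λ ∧
      ∀ Λ' : Relator F, IsLaxExtension F Λ' → IsNormal F Λ' →
        ∀ {X Y : Type u} (r : X → Y → Prop) (u : F.obj X) (v : F.obj Y),
          Λ'.map r u v → Λ.map r u v := by
  refine ⟨Stmt12Aux.GNLE F, ⟨Stmt12Aux.gnle_relax h, ?_⟩, Stmt12Aux.gnle_normal h, ?_⟩
  · intro X Y Z r s u w hc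
    exact Stmt12Aux.gnle_comp h r s u w hc
  · intro Λ' hlax hnorm X Y r u v hr
    exact Stmt12Aux.gnle_greatest Λ' hlax hnorm r u v hr
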